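/- Let T be a nonzero D×D complex matrix and U₁, …, U_N be D×D matrices, each a tensor product of Pauli matrices (possibly with scalar factors ±1, ±i), that are independent (no product of a subset of them is a scalar multiple of the identity) and satisfy T·U_k = c_k T for scalars c_k with |c_k| = 1, for k = 1,…,N. Then rank(T) ≤ D / 2^N. -/

import Mathlib

open Matrix

noncomputable def pauli : Fin 4 → Matrix (Fin 2) (Fin 2) ℂ :=
  ![1, !![0, 1; 1, 0], !![0, -Complex.I; Complex.I, 0], !![1, 0; 0, -1]]

/-- Tensor product of `n` Pauli matrices, as a `2^n × 2^n` matrix indexed by bit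
strings. -/
noncomputable def pauliTensor {n : ℕ} (σ : Fin n → Fin 4) :
    Matrix (Fin n → Fin 2) (Fin n → Fin 2) ℂ :=
  fun x y => ∏ i, pauli (σ i) (x i) (y i)

/-! ### Auxiliary single-qubit Pauli algebra -/

def pmul : Fin 4 → Fin 4 → Fin 4 :=
  ![![0,1,2,3], ![1,0,3,2], ![2,3,0,1], ![3,2,1,0]]

noncomputable def pphase : Fin 4 → Fin 4 → ℂ :=
  ![![1,1,1,1], ![1,1,Complex.I,-Complex.I], ![1,-Complex.I,1,Complex.I],
    ![1,Complex.I,-Complex.I,1]]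

lemma pauli_mul (a b : Fin 4) : pauli a * pauli b = pphase a b • pauli (pmul a b) := by
  fin_cases a <;> fin_cases b <;>
    · ext i j
      fin_cases i <;> fin_cases j <;>
        simp [pauli, pmul, pphase, Matrix.mul_apply, Fin.sum_univ_two, Matrix.one_apply,
          Matrix.vecHead, Matrix.vecTail, Complex.ext_iff]

lemma pmul_comm (a b : Fin 4) : pmul a b = pmul b a := by revert a b; decide
lemma pmul_self (a : Fin 4) : pmul a a = 0 := by revert a; decide
lemma pphase_self (a : Fin 4) : pphase a a = 1 := by fin_cases a <;> rfl
lemma pphase_ne_zero (a b : Fin 4) : pphase a b ≠ 0 := by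
  fin_cases a <;> fin_cases b <;>
    simp [pphase, Complex.I_ne_zero, Matrix.vecHead, Matrix.vecTail]

/-! ### Tensor-product Pauli algebra -/

lemma pauliTensor_mul {n : ℕ} (σ τ : Fin n → Fin 4) :
    pauliTensor σ * pauliTensor τ =
      (∏ i, pphase (σ i) (τ i)) • pauliTensor (fun i => pmul (σ i) (τ i)) := by
  ext x y
  rw [Matrix.mul_apply]
  simp only [pauliTensor, Matrix.smul_apply, smul_eq_mul]
  calc
    ∑ z : Fin n → Fin 2, (∏ i, pauli (σ i) (x i) (z i)) * ∏ i, pauli (τ i) (z i) (y i)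
        = ∑ z : Fin n → Fin 2, ∏ i, (pauli (σ i) (x i) (z i) * pauli (τ i) (z i) (y i)) := by
          simp_rw [Finset.prod_mul_distrib]
    _ = ∏ i, ∑ c : Fin 2, pauli (σ i) (x i) c * pauli (τ i) c (y i) := by
          rw [← Fintype.piFinset_univ]
          exact Finset.sum_prod_piFinset Finset.univ
            (fun i c => pauli (σ i) (x i) c * pauli (τ i) c (y i))
    _ = ∏ i, (pauli (σ i) * pauli (τ i)) (x i) (y i) := by
          simp [Matrix.mul_apply]
    _ = (∏ i, pphase (σ i) (τ i)) * ∏ i, pauli (pmul (σ i) (τ i)) (x i) (y i) := by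
          simp_rw [pauli_mul, Matrix.smul_apply, smul_eq_mul, Finset.prod_mul_distrib]

lemma pauliTensor_zero {n : ℕ} : pauliTensor (fun _ : Fin n => (0 : Fin 4)) = 1 := by
  ext x y
  simp only [pauliTensor, pauli]
  by_cases h : x = y
  · subst h; simp [Matrix.one_apply]
  · rw [Matrix.one_apply_ne h]
    obtain ⟨i, hi⟩ := Function.ne_iff.mp h
    exact Finset.prod_eq_zero (Finset.mem_univ i) (by simp [Matrix.one_apply, hi])

lemma pauliTensor_mul_self {n : ℕ} (σ : Fin n → Fin 4) :
    pauliTensor σ * pauliTensor σ = 1 := by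
  rw [pauliTensor_mul]
  have h1 : (fun i => pmul (σ i) (σ i)) = (fun _ : Fin n => (0 : Fin 4)) := by
    funext i; rw [pmul_self]
  rw [h1, pauliTensor_zero]
  simp [pphase_self]

lemma trace_pauli_eq_zero (a : Fin 4) (ha : a ≠ 0) : Matrix.trace (pauli a) = 0 := by
  fin_cases a
  · exact absurd rfl ha
  all_goals simp [pauli, Matrix.trace, Fin.sum_univ_two, Matrix.vecHead, Matrix.vecTail]

lemma trace_pauliTensor {n : ℕ} (σ : Fin n → Fin 4) (i₀ : Fin n) (h : σ i₀ ≠ 0) :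
    Matrix.trace (pauliTensor σ) = 0 := by
  have key : Matrix.trace (pauliTensor σ) = ∏ i, Matrix.trace (pauli (σ i)) := by
    simp only [Matrix.trace, Matrix.diag, pauliTensor]
    rw [← Fintype.piFinset_univ]
    exact Finset.sum_prod_piFinset Finset.univ (fun i c => pauli (σ i) c c)
  rw [key]
  exact Finset.prod_eq_zero (Finset.mem_univ i₀) (trace_pauli_eq_zero _ h)

/-! ### Generic list-product lemmas -/

lemma list_prod_map_smul {ι A : Type*} [Ring A] [Algebra ℂ A]
    (a : ι → ℂ) (B : ι → A) (l : List ι) :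
    (l.map fun k => a k • B k).prod = (l.map a).prod • (l.map B).prod := by
  induction l with
  | nil => simp
  | cons x xs ih =>
    simp only [List.map_cons, List.prod_cons, ih]
    rw [smul_mul_smul_comm]

lemma mul_list_prod_eq {ι A : Type*} [Monoid A] (T : A) (R : ι → A) (l : List ι)
    (h : ∀ k ∈ l, T * R k = T) : T * (l.map R).prod = T := by
  induction l with
  | nil => simp
  | cons x xs ih =>
    rw [List.map_cons, List.prod_cons, ← mul_assoc, h x (by simp),
      ih (fun k hk => h k (by simp [hk]))]

lemma list_prod_idem {ι A : Type*} [Monoid A] (R : ι → A) (l : List ι)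
    (hcomm : ∀ j k, Commute (R j) (R k)) (hidem : ∀ k, R k * R k = R k) :
    (l.map R).prod * (l.map R).prod = (l.map R).prod := by
  induction l with
  | nil => simp
  | cons x xs ih =>
    have hx : Commute (R x) ((xs.map R).prod) := by
      apply Commute.list_prod_right
      intro y hy
      obtain ⟨k, -, rfl⟩ := List.mem_map.mp hy
      exact hcomm x k
    rw [List.map_cons, List.prod_cons]
    calc R x * (xs.map R).prod * (R x * (xs.map R).prod)
        = R x * ((xs.map R).prod * R x) * (xs.map R).prod := by
          simp only [mul_assoc]
      _ = R x * (R x * (xs.map R).prod) * (xs.map R).prod := by rw [hx.eq]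
      _ = (R x * R x) * ((xs.map R).prod * (xs.map R).prod) := by
          simp only [mul_assoc]
      _ = R x * (xs.map R).prod := by rw [hidem, ih]

lemma trace_proj_aux {D : Type*} [Fintype D] [DecidableEq D] {ι : Type*}
    (Q : ι → Matrix D D ℂ) (l : List ι) :
    ∀ M : Matrix D D ℂ,
      (∀ s : List ι, s.Sublist l → s ≠ [] → Matrix.trace (M * (s.map Q).prod) = 0) →
      Matrix.trace (M * (l.map fun k => (2⁻¹ : ℂ) • (1 + Q k)).prod)
        = M.trace / 2 ^ l.length := by
  induction l with
  | nil => intro M _; simp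
  | cons a l ih =>
    intro M h
    rw [List.map_cons, List.prod_cons, ← mul_assoc]
    have hMa : M * ((2⁻¹ : ℂ) • (1 + Q a)) = (2⁻¹ : ℂ) • (M + M * Q a) := by
      rw [Matrix.mul_smul, Matrix.mul_add, Matrix.mul_one]
    rw [hMa, Matrix.smul_mul, Matrix.add_mul, Matrix.trace_smul, Matrix.trace_add]
    have h1 := ih M (fun s hs hne => h s (hs.cons a) hne)
    have h2 := ih (M * Q a) (fun s hs hne => by
      rw [mul_assoc]
      have := h (a :: s) (hs.cons₂ a) (by simp)
      rwa [List.map_cons, List.prod_cons] at this)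
    have h0 : (M * Q a).trace = 0 := by
      have := h [a] ((List.nil_sublist l).cons₂ a) (by simp)
      simpa using this
    rw [h1, h2, h0]
    simp only [List.length_cons, smul_eq_mul]
    rw [zero_div]
    ring

lemma rank_eq_trace_of_idem {D : Type*} [Fintype D] [DecidableEq D]
    (A : Matrix D D ℂ) (h : A * A = A) : (A.rank : ℂ) = A.trace := by
  have hf : A.mulVecLin ∘ₗ A.mulVecLin = A.mulVecLin := by
    rw [← Matrix.mulVecLin_mul, h]
  have hproj : LinearMap.IsProj (LinearMap.range A.mulVecLin) A.mulVecLin := by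
    refine ⟨fun x => LinearMap.mem_range_self _ x, ?_⟩
    rintro x ⟨y, rfl⟩
    have := LinearMap.congr_fun hf y
    simpa using this
  have ht := hproj.trace
  rw [Matrix.rank, ← ht]
  rw [LinearMap.trace_eq_matrix_trace ℂ (Pi.basisFun ℂ D), LinearMap.toMatrix_eq_toMatrix',
    ← Matrix.toLin'_apply', LinearMap.toMatrix'_toLin']

/-! ### Main theorem -/

/-- If a nonzero matrix `T` satisfies `T Uₖ = cₖ T` for `N` independent (phased)
tensor products of Pauli matrices, then `rank T ≤ D / 2^N` with `D = 2^n`. -/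
theorem rank_bound_from_pauli_constraints (n N : ℕ)
    (T : Matrix (Fin n → Fin 2) (Fin n → Fin 2) ℂ) (hT : T ≠ 0)
    (U : Fin N → Matrix (Fin n → Fin 2) (Fin n → Fin 2) ℂ)
    (hpauli : ∀ k, ∃ (ph : ℂ) (σ : Fin n → Fin 4),
      ph ∈ ({1, -1, Complex.I, -Complex.I} : Set ℂ) ∧ U k = ph • pauliTensor σ)
    (hindep : ∀ l : List (Fin N), l ≠ [] → l.Nodup →
      ∀ ph : ℂ, (l.map U).prod ≠ ph • (1 : Matrix (Fin n → Fin 2) (Fin n → Fin 2) ℂ))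
    (c : Fin N → ℂ) (hc : ∀ k, ‖c k‖ = 1)
    (heq : ∀ k, T * U k = c k • T) :
    (T.rank : ℝ) ≤ (2 ^ n : ℝ) / (2 ^ N : ℝ) := by
  classical
  have hc0 : ∀ k, c k ≠ 0 := by
    intro k hk
    have := hc k
    rw [hk] at this
    simp at this
  set Q : Fin N → Matrix (Fin n → Fin 2) (Fin n → Fin 2) ℂ :=
    fun k => (c k)⁻¹ • U k with hQdef
  have hTQ : ∀ k, T * Q k = T := by
    intro k
    show T * ((c k)⁻¹ • U k) = T
    rw [Matrix.mul_smul, heq k, smul_smul, inv_mul_cancel₀ (hc0 k), one_smul]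
  have hQform : ∀ k, ∃ e : ℂ, e ≠ 0 ∧ ∃ σ, Q k = e • pauliTensor σ := by
    intro k
    obtain ⟨ph, σ, hph, hU⟩ := hpauli k
    have hph0 : ph ≠ 0 := by
      simp only [Set.mem_insert_iff, Set.mem_singleton_iff] at hph
      rcases hph with rfl | rfl | rfl | rfl <;> simp [Complex.I_ne_zero]
    refine ⟨(c k)⁻¹ * ph, mul_ne_zero (inv_ne_zero (hc0 k)) hph0, σ, ?_⟩
    show (c k)⁻¹ • U k = _
    rw [hU, smul_smul]
  -- products of the `U`s are phased Pauli tensors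
  have hUprod : ∀ l : List (Fin N), ∃ (e : ℂ) (σ : Fin n → Fin 4),
      (l.map U).prod = e • pauliTensor σ := by
    intro l
    induction l with
    | nil =>
      exact ⟨(1 : ℂ), fun _ : Fin n => (0 : Fin 4), by
        rw [List.map_nil, List.prod_nil, pauliTensor_zero, one_smul]⟩
    | cons a l ih =>
      obtain ⟨e, σ, hprod⟩ := ih
      obtain ⟨ph, τ, -, hU⟩ := hpauli a
      refine ⟨ph * e * ∏ i, pphase (τ i) (σ i), fun i => pmul (τ i) (σ i), ?_⟩
      rw [List.map_cons, List.prod_cons, hprod, hU, Matrix.smul_mul, Matrix.mul_smul,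
        pauliTensor_mul, smul_smul, smul_smul, mul_assoc]
  -- traces of nonempty products of distinct `U`s vanish
  have htrU : ∀ s : List (Fin N), s ≠ [] → s.Nodup →
      Matrix.trace ((s.map U).prod) = 0 := by
    intro s hne hnd
    obtain ⟨e, σ, hs⟩ := hUprod s
    by_cases h0 : ∀ i, σ i = 0
    · exfalso
      apply hindep s hne hnd e
      rw [hs, show σ = fun _ => 0 from funext h0, pauliTensor_zero]
    · push_neg at h0
      obtain ⟨i, hi⟩ := h0
      rw [hs, Matrix.trace_smul, trace_pauliTensor σ i hi, smul_zero]
  -- `Q k` squares to the identity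
  have hQQ : ∀ k, Q k * Q k = 1 := by
    intro k
    obtain ⟨e, he0, σ, hQk⟩ := hQform k
    have h1 : Q k * Q k = (e * e) • (1 : Matrix (Fin n → Fin 2) (Fin n → Fin 2) ℂ) := by
      rw [hQk, Matrix.smul_mul, Matrix.mul_smul, pauliTensor_mul_self, smul_smul]
    have key : T * (Q k * Q k) = T := by rw [← mul_assoc, hTQ k, hTQ k]
    rw [h1, Matrix.mul_smul, Matrix.mul_one] at key
    have h4 : (e * e - 1) • T = 0 := by rw [sub_smul, one_smul, key, sub_self]
    rcases smul_eq_zero.mp h4 with h | h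
    · rw [h1, sub_eq_zero.mp h, one_smul]
    · exact absurd h hT
  -- the `Q k` pairwise commute
  have hcommQ : ∀ j k, Q j * Q k = Q k * Q j := by
    intro j k
    obtain ⟨e1, he1, σ, h1⟩ := hQform j
    obtain ⟨e2, he2, τ, h2⟩ := hQform k
    have hjk : Q j * Q k
        = (e1 * e2 * ∏ i, pphase (σ i) (τ i)) • pauliTensor (fun i => pmul (σ i) (τ i)) := by
      rw [h1, h2, Matrix.smul_mul, Matrix.mul_smul, pauliTensor_mul, smul_smul, smul_smul,
        mul_assoc]
    have hkj : Q k * Q j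
        = (e1 * e2 * ∏ i, pphase (τ i) (σ i)) • pauliTensor (fun i => pmul (σ i) (τ i)) := by
      rw [h2, h1, Matrix.smul_mul, Matrix.mul_smul, pauliTensor_mul, smul_smul, smul_smul]
      have hsymm : (fun i => pmul (τ i) (σ i)) = fun i => pmul (σ i) (τ i) := by
        funext i; rw [pmul_comm]
      rw [hsymm]
      congr 1
      ring
    have kT1 : T * (Q j * Q k) = T := by rw [← mul_assoc, hTQ j, hTQ k]
    have kT2 : T * (Q k * Q j) = T := by rw [← mul_assoc, hTQ k, hTQ j]
    rw [hjk, Matrix.mul_smul] at kT1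
    rw [hkj, Matrix.mul_smul] at kT2
    have hd : ((e1 * e2 * ∏ i, pphase (σ i) (τ i)) - (e1 * e2 * ∏ i, pphase (τ i) (σ i))) •
        (T * pauliTensor (fun i => pmul (σ i) (τ i))) = 0 := by
      rw [sub_smul, kT1, kT2, sub_self]
    rcases smul_eq_zero.mp hd with h | h
    · rw [hjk, hkj, sub_eq_zero.mp h]
    · exfalso
      apply hT
      rw [← kT1, h, smul_zero]
  -- the projector factors
  have hcommR : ∀ j k,
      Commute ((2⁻¹ : ℂ) • (1 + Q j)) ((2⁻¹ : ℂ) • (1 + Q k)) := by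
    intro j k
    show ((2⁻¹ : ℂ) • (1 + Q j)) * ((2⁻¹ : ℂ) • (1 + Q k)) = _
    rw [smul_mul_smul_comm, smul_mul_smul_comm]
    congr 1
    have e1 : (1 + Q j) * (1 + Q k) = 1 + Q j + Q k + Q j * Q k := by noncomm_ring
    have e2 : (1 + Q k) * (1 + Q j) = 1 + Q k + Q j + Q k * Q j := by noncomm_ring
    rw [e1, e2, hcommQ j k]
    abel
  have hidemR : ∀ k,
      ((2⁻¹ : ℂ) • (1 + Q k)) * ((2⁻¹ : ℂ) • (1 + Q k)) = (2⁻¹ : ℂ) • (1 + Q k) := by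
    intro k
    rw [smul_mul_smul_comm]
    have e : (1 + Q k) * (1 + Q k) = 1 + Q k + Q k + Q k * Q k := by noncomm_ring
    have e' : (1 + Q k) * (1 + Q k) = (2 : ℂ) • (1 + Q k) := by
      rw [e, hQQ k, two_smul]
      abel
    rw [e', smul_smul]
    norm_num
  have hTR : ∀ k, T * ((2⁻¹ : ℂ) • (1 + Q k)) = T := by
    intro k
    rw [Matrix.mul_smul, Matrix.mul_add, Matrix.mul_one, hTQ k, ← two_smul ℂ T, smul_smul]
    norm_num
  -- the projector
  set P : Matrix (Fin n → Fin 2) (Fin n → Fin 2) ℂ :=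
    ((List.finRange N).map fun k => (2⁻¹ : ℂ) • (1 + Q k)).prod with hPdef
  have hTP : T * P = T :=
    mul_list_prod_eq T (fun k => (2⁻¹ : ℂ) • (1 + Q k)) _ (fun k _ => hTR k)
  have hPP : P * P = P :=
    list_prod_idem (fun k => (2⁻¹ : ℂ) • (1 + Q k)) _ hcommR hidemR
  have htrP : P.trace = (2 ^ n : ℂ) / 2 ^ N := by
    have hhyp : ∀ s : List (Fin N), s.Sublist (List.finRange N) → s ≠ [] →
        Matrix.trace ((1 : Matrix (Fin n → Fin 2) (Fin n → Fin 2) ℂ) * (s.map Q).prod) = 0 := by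
      intro s hs hne
      rw [Matrix.one_mul]
      show Matrix.trace ((s.map fun k => (c k)⁻¹ • U k).prod) = 0
      rw [list_prod_map_smul (fun k => (c k)⁻¹) U s, Matrix.trace_smul,
        htrU s hne ((List.nodup_finRange N).sublist hs), smul_zero]
    have key := trace_proj_aux Q (List.finRange N) 1 hhyp
    rw [Matrix.one_mul, Matrix.trace_one, List.length_finRange, ← hPdef] at key
    rw [key]
    congr 1
    simp
  -- conclude
  have hrank : T.rank ≤ P.rank := by
    calc T.rank = (T * P).rank := by rw [hTP]
      _ ≤ P.rank := Matrix.rank_mul_le_right T P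
  have hPrank : (P.rank : ℝ) = (2 ^ n : ℝ) / (2 ^ N : ℝ) := by
    have h1 : (P.rank : ℂ) = (2 ^ n : ℂ) / 2 ^ N := (rank_eq_trace_of_idem P hPP).trans htrP
    have h2 : ((P.rank : ℝ) : ℂ) = (((2 ^ n : ℝ) / (2 ^ N : ℝ) : ℝ) : ℂ) := by
      push_cast
      push_cast at h1
      exact h1
    exact_mod_cast h2
  rw [← hPrank]
  exact_mod_cast hrank
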